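/- Let L be a finite-dimensional nilpotent Lie algebra over a field F and let H be a Lie subalgebra of L such that L² = H² + L³ (where L², L³ are terms of the lower central series of L and H² is the derived subalgebra of H). Then Lⁱ = Hⁱ for all i ≥ 2, and moreover H is an ideal of L. -/

import Mathlib

section AuxStmt0

variable {K : Type*} [Field K] {A : Type*} [LieRing A] [LieAlgebra K A]

lemma aux_lcs_bracket : ∀ (a b : ℕ) (x y : A), x ∈ LieModule.lowerCentralSeries K A A a →
    y ∈ LieModule.lowerCentralSeries K A A b →
    ⁅x, y⁆ ∈ LieModule.lowerCentralSeries K A A (a + b + 1) := by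
  intro a
  induction a with
  | zero =>
    intro b x y _ hy
    rw [Nat.zero_add, LieModule.lowerCentralSeries_succ]
    exact LieSubmodule.lie_mem_lie (LieSubmodule.mem_top x) hy
  | succ a ih =>
    intro b x y hx hy
    have hx' : x ∈ LieSubmodule.toSubmodule (⁅(⊤ : LieIdeal K A),
        LieModule.lowerCentralSeries K A A a⁆ : LieSubmodule K A A) := by
      rw [← LieModule.lowerCentralSeries_succ]; exact hx
    rw [LieSubmodule.lieIdeal_oper_eq_linear_span'] at hx'
    have key : a + 1 + b + 1 = (a + b + 1) + 1 := by omega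
    refine Submodule.span_induction ?_ ?_ ?_ ?_ hx'
    · rintro _ ⟨z, -, w, hw, rfl⟩
      rw [lie_lie]
      refine Submodule.sub_mem _ ?_ ?_
      · have h1 : ⁅w, y⁆ ∈ LieModule.lowerCentralSeries K A A (a + b + 1) := ih b w y hw hy
        rw [key, LieModule.lowerCentralSeries_succ]
        exact LieSubmodule.lie_mem_lie (LieSubmodule.mem_top z) h1
      · have h1 : ⁅z, y⁆ ∈ LieModule.lowerCentralSeries K A A (b + 1) := by
          rw [LieModule.lowerCentralSeries_succ]
          exact LieSubmodule.lie_mem_lie (LieSubmodule.mem_top z) hy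
        have h2 := ih (b + 1) w _ hw h1
        rw [key]
        exact h2
    · simp
    · intro u v _ _ hu hv; rw [add_lie]; exact Submodule.add_mem _ hu hv
    · intro t u _ hu; rw [smul_lie]; exact Submodule.smul_mem _ t hu

lemma aux_bracket_top_le (N : LieSubmodule K A A) (T : Submodule K A)
    (h : ∀ x : A, ∀ y ∈ N, ⁅x, y⁆ ∈ T) :
    LieSubmodule.toSubmodule (⁅(⊤ : LieIdeal K A), N⁆ : LieSubmodule K A A) ≤ T := by
  rw [LieSubmodule.lieIdeal_oper_eq_linear_span']
  refine Submodule.span_le.2 ?_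
  rintro _ ⟨x, -, n, hn, rfl⟩
  exact h x n hn

variable (H : LieSubalgebra K A)

/-- The image in `A` of the `i`-th term of the lower central series of `H`. -/
noncomputable def auxHi (i : ℕ) : Submodule K A :=
  Submodule.map H.incl.toLinearMap (LieModule.lowerCentralSeries K H H i).toSubmodule

lemma aux_hi_def (i : ℕ) : auxHi H i =
    Submodule.map H.incl.toLinearMap (LieModule.lowerCentralSeries K H H i).toSubmodule := rfl

lemma aux_mem_hi {i : ℕ} {b : A} :
    b ∈ auxHi H i ↔ ∃ b' ∈ LieModule.lowerCentralSeries K H H i, (b' : A) = b := by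
  simp [auxHi, Submodule.mem_map]

lemma aux_hi_le_subalg (i : ℕ) : auxHi H i ≤ H.toSubmodule := by
  rintro b hb
  obtain ⟨b', -, rfl⟩ := (aux_mem_hi H).1 hb
  exact b'.2

lemma aux_hi_antitone {i j : ℕ} (h : i ≤ j) : auxHi H j ≤ auxHi H i :=
  Submodule.map_mono (by
    exact_mod_cast (LieSubmodule.toSubmodule_le_toSubmodule _ _).2
      (LieModule.antitone_lowerCentralSeries K H H h))

lemma aux_hi_le_lcs : ∀ i : ℕ, auxHi H i ≤
    LieSubmodule.toSubmodule (LieModule.lowerCentralSeries K A A i) := by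
  intro i
  induction i with
  | zero => exact le_top
  | succ i ih =>
    rintro b hb
    obtain ⟨b', hb', rfl⟩ := (aux_mem_hi H).1 hb
    rw [LieModule.lowerCentralSeries_succ] at hb'
    have hb'' : (b' : H) ∈ LieSubmodule.toSubmodule
        (⁅(⊤ : LieIdeal K H), LieModule.lowerCentralSeries K H H i⁆ : LieSubmodule K H H) := hb'
    rw [LieSubmodule.lieIdeal_oper_eq_linear_span'] at hb''
    rw [LieSubmodule.mem_toSubmodule, LieModule.lowerCentralSeries_succ]
    have : ∀ c : H, c ∈ Submodule.span K {m : H | ∃ x ∈ (⊤ : LieIdeal K H),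
        ∃ n ∈ LieModule.lowerCentralSeries K H H i, ⁅x, n⁆ = m} →
        (c : A) ∈ (⁅(⊤ : LieIdeal K A), LieModule.lowerCentralSeries K A A i⁆ :
          LieSubmodule K A A) := by
      intro c hc
      refine Submodule.span_induction ?_ ?_ ?_ ?_ hc
      · rintro _ ⟨x, -, n, hn, rfl⟩
        have hnA : (n : A) ∈ LieModule.lowerCentralSeries K A A i :=
          ih ((aux_mem_hi H).2 ⟨n, hn, rfl⟩)
        exact LieSubmodule.lie_mem_lie (LieSubmodule.mem_top (x : A)) hnA
      · simp
      · intro u v _ _ hu hv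
        exact add_mem hu hv
      · intro t u _ hu
        exact Submodule.smul_mem _ t hu
    exact this b' hb''

lemma aux_hi_bracket {i : ℕ} {a b : A} (ha : a ∈ H) (hb : b ∈ auxHi H i) :
    ⁅a, b⁆ ∈ auxHi H (i + 1) := by
  obtain ⟨b', hb', rfl⟩ := (aux_mem_hi H).1 hb
  refine (aux_mem_hi H).2 ⟨⁅(⟨a, ha⟩ : H), b'⁆, ?_, rfl⟩
  rw [LieModule.lowerCentralSeries_succ]
  exact LieSubmodule.lie_mem_lie (LieSubmodule.mem_top _) hb'

lemma aux_hi_bracket' {i : ℕ} {u b : A} (hu : u ∈ auxHi H 1) (hb : b ∈ auxHi H i) :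
    ⁅u, b⁆ ∈ auxHi H (i + 2) := by
  obtain ⟨u', hu', rfl⟩ := (aux_mem_hi H).1 hu
  obtain ⟨b', hb', rfl⟩ := (aux_mem_hi H).1 hb
  have := aux_lcs_bracket 1 i u' b' hu' hb'
  have key : 1 + i + 1 = i + 2 := by omega
  rw [key] at this
  exact (aux_mem_hi H).2 ⟨⁅u', b'⁆, this, rfl⟩

end AuxStmt0



/-- If `L` is a finite-dimensional nilpotent Lie algebra and `H` a subalgebra
with `L² = H² + L³`, then `Lⁱ = Hⁱ` for all `i ≥ 2` and `H` is an ideal of `L`.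
(Here the paper's `Lⁱ` is `LieModule.lowerCentralSeries K L L (i-1)`.) -/
theorem stmt_0 (K : Type*) [Field K] (L : Type*) [LieRing L] [LieAlgebra K L]
    [FiniteDimensional K L] [LieRing.IsNilpotent L]
    (H : LieSubalgebra K L)
    (hyp : (LieModule.lowerCentralSeries K L L 1).toSubmodule =
      Submodule.map H.incl.toLinearMap
        (LieModule.lowerCentralSeries K H H 1).toSubmodule ⊔
      (LieModule.lowerCentralSeries K L L 2).toSubmodule) :
    (∀ i : ℕ, 1 ≤ i →
      (LieModule.lowerCentralSeries K L L i).toSubmodule =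
        Submodule.map H.incl.toLinearMap
          (LieModule.lowerCentralSeries K H H i).toSubmodule) ∧
    (∀ x : L, ∀ y ∈ H, ⁅x, y⁆ ∈ H) := by
  set li : ℕ → Submodule K L :=
    fun i => (LieModule.lowerCentralSeries K L L i).toSubmodule with hli
  have hyp' : li 1 = auxHi H 1 ⊔ li 2 := by rw [aux_hi_def]; exact hyp
  have hli_succ : ∀ i, ∀ x y : L, y ∈ LieModule.lowerCentralSeries K L L i →
      ⁅x, y⁆ ∈ li (i + 1) := by
    intro i x y hy
    show _ ∈ LieSubmodule.toSubmodule _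
    rw [LieSubmodule.mem_toSubmodule, LieModule.lowerCentralSeries_succ]
    exact LieSubmodule.lie_mem_lie (LieSubmodule.mem_top x) hy
  -- Step A
  have hA : ∀ i, ∀ x : L, ∀ b ∈ auxHi H i, ⁅x, b⁆ ∈ auxHi H (i + 1) ⊔ li (i + 2) := by
    intro i
    induction i with
    | zero =>
      intro x b _
      have h1 : ⁅x, b⁆ ∈ li 1 := hli_succ 0 x b (LieSubmodule.mem_top b)
      rw [hyp'] at h1
      exact h1
    | succ i ih =>
      intro x b hb
      obtain ⟨b'', hb'', rfl⟩ := (aux_mem_hi H).1 hb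
      rw [LieModule.lowerCentralSeries_succ] at hb''
      have hb2 : b'' ∈ LieSubmodule.toSubmodule
          (⁅(⊤ : LieIdeal K H), LieModule.lowerCentralSeries K H H i⁆ :
            LieSubmodule K H H) := hb''
      rw [LieSubmodule.lieIdeal_oper_eq_linear_span'] at hb2
      refine Submodule.span_induction (R := K) (M := H)
        (p := fun c _ => ⁅x, (c : L)⁆ ∈ auxHi H (i + 2) ⊔ li (i + 3)) ?_ ?_ ?_ ?_ hb2
      · rintro _ ⟨a', -, n, hn, rfl⟩
        have hcoe : ((⁅a', n⁆ : H) : L) = ⁅(a' : L), (n : L)⁆ := rfl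
        rw [hcoe, leibniz_lie]
        have hnH : (n : L) ∈ auxHi H i := (aux_mem_hi H).2 ⟨n, hn, rfl⟩
        refine add_mem ?_ ?_
        · -- ⁅⁅x, a'⁆, n⁆
          have hxa : ⁅x, (a' : L)⁆ ∈ li 1 := hli_succ 0 x _ (LieSubmodule.mem_top _)
          rw [hyp'] at hxa
          obtain ⟨u, hu, v, hv, huv⟩ := Submodule.mem_sup.1 hxa
          rw [← huv, add_lie]
          refine add_mem ?_ ?_
          · exact Submodule.mem_sup_left (aux_hi_bracket' H hu hnH)
          · refine Submodule.mem_sup_right ?_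
            have := aux_lcs_bracket 2 i v (n : L) hv (aux_hi_le_lcs H i hnH)
            have key : 2 + i + 1 = i + 3 := by omega
            rwa [key] at this
        · -- ⁅a', ⁅x, n⁆⁆
          have hxn := ih x (n : L) hnH
          obtain ⟨u, hu, v, hv, huv⟩ := Submodule.mem_sup.1 hxn
          rw [← huv, lie_add]
          refine add_mem ?_ ?_
          · exact Submodule.mem_sup_left (aux_hi_bracket H a'.2 hu)
          · exact Submodule.mem_sup_right (hli_succ (i + 2) _ v hv)
      · simp
      · intro u v _ _ hu hv
        have : ((u + v : H) : L) = (u : L) + (v : L) := rfl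
        rw [this, lie_add]; exact add_mem hu hv
      · intro t u _ hu
        have : ((t • u : H) : L) = t • (u : L) := rfl
        rw [this, lie_smul]; exact Submodule.smul_mem _ t hu
  -- Step D
  have hD : ∀ i, 1 ≤ i → li i = auxHi H i ⊔ li (i + 1) := by
    intro i hi
    induction i, hi using Nat.le_induction with
    | base => exact hyp'
    | succ i hi ih =>
      refine le_antisymm ?_ ?_
      · show LieSubmodule.toSubmodule (LieModule.lowerCentralSeries K L L (i + 1)) ≤ _
        rw [LieModule.lowerCentralSeries_succ]
        refine aux_bracket_top_le _ _ ?_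
        intro x y hy
        have hy' : y ∈ li i := hy
        rw [ih] at hy'
        obtain ⟨u, hu, v, hv, huv⟩ := Submodule.mem_sup.1 hy'
        rw [← huv, lie_add]
        refine add_mem (hA i x u hu) (Submodule.mem_sup_right ?_)
        exact hli_succ (i + 1) x v hv
      · refine sup_le (aux_hi_le_lcs H (i + 1)) ?_
        exact (LieSubmodule.toSubmodule_le_toSubmodule _ _).2
          (LieModule.antitone_lowerCentralSeries K L L (by omega))
  -- Iterate D
  have hE : ∀ i, 1 ≤ i → ∀ k, li i = auxHi H i ⊔ li (i + k + 1) := by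
    intro i hi k
    induction k with
    | zero => exact hD i hi
    | succ k ih =>
      have hidx : i + (k + 1) + 1 = i + k + 1 + 1 := by omega
      rw [hidx, ih, hD (i + k + 1) (by omega), ← sup_assoc,
        sup_eq_left.2 (aux_hi_antitone H (by omega : i ≤ i + k + 1))]
  obtain ⟨n, hn⟩ := LieModule.IsNilpotent.nilpotent K L L
  have hmain : ∀ i, 1 ≤ i → li i = auxHi H i := by
    intro i hi
    have h1 := hE i hi n
    have h2 : li (i + n + 1) = ⊥ := by
      have h3 := LieModule.antitone_lowerCentralSeries K L L (by omega : n ≤ i + n + 1)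
      rw [hn, le_bot_iff] at h3
      show LieSubmodule.toSubmodule (LieModule.lowerCentralSeries K L L (i + n + 1)) = ⊥
      rw [h3]
      simp
    rw [h2, sup_bot_eq] at h1
    exact h1
  refine ⟨fun i hi => hmain i hi, fun x y hy => ?_⟩
  have h1 : ⁅x, y⁆ ∈ li 1 := hli_succ 0 x y (LieSubmodule.mem_top y)
  rw [hmain 1 le_rfl] at h1
  exact (aux_hi_le_subalg H 1 h1 : ⁅x, y⁆ ∈ H.toSubmodule)
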